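/- arXiv:2602.17451 — 3 statements merged into one kernel-verified Lean document; each statement's English description precedes it below -/
import Mathlib

section
/- Let n ≥ 2 be an integer. The greatest common divisor of the binomial coefficients C(n, j) for 1 ≤ j ≤ n−1 equals p if n is a power of a prime number p, and equals 1 if n is not a prime power. -/
lemma aux_pow (n q : ℕ) (hn : 2 ≤ n) (hq : q.Prime)
    (h : ∀ j ∈ Finset.Ioo 0 n, q ∣ n.choose j) : n = q ^ (n.factorization q) := by
  have hqn : q ∣ n := by
    have := h 1 (by simp; omega)
    simpa using this
  obtain ⟨a, ha⟩ : ∃ a, a = n.factorization q := ⟨_, rfl⟩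
  rw [← ha]
  have hn0 : n ≠ 0 := by omega
  have ha1 : 1 ≤ a := ha ▸ (Nat.Prime.factorization_pos_of_dvd hq hn0 hqn)
  have hqa0 : 0 < q ^ a := pow_pos hq.pos a
  have hpow : q ^ a ∣ n := ha ▸ Nat.ordProj_dvd n q
  obtain ⟨m, hnm⟩ := hpow
  have hqm : ¬ q ∣ m := by
    have h' := Nat.not_dvd_ordCompl hq hn0
    rw [← ha, hnm, Nat.mul_div_cancel_left _ hqa0] at h'
    exact h'
  have hm1 : m ≠ 0 := by rintro rfl; simp at hnm; omega
  rcases eq_or_lt_of_le (Nat.one_le_iff_ne_zero.mpr hm1) with hm2 | hm2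
  · rw [hnm, ← hm2, mul_one]
  · exfalso
    have hmem : q ^ a ∈ Finset.Ioo 0 n := by
      simp only [Finset.mem_Ioo]
      refine ⟨hqa0, ?_⟩
      calc q ^ a = q ^ a * 1 := (mul_one _).symm
        _ < q ^ a * m := by exact (Nat.mul_lt_mul_left hqa0).mpr hm2
        _ = n := hnm.symm
    have hdvd := h _ hmem
    haveI : Fact q.Prime := ⟨hq⟩
    have lucas := Choose.choose_modEq_choose_mul_prod_range_choose (n := n) (k := q ^ a) (p := q) a
    have h1 : (q ^ a) / q ^ a = 1 := Nat.div_self hqa0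
    have h2 : n / q ^ a = m := by rw [hnm, Nat.mul_div_cancel_left _ hqa0]
    have h3 : (∏ i ∈ Finset.range a, (n / q ^ i % q).choose ((q ^ a) / q ^ i % q)) = 1 := by
      apply Finset.prod_eq_one
      intro i hi
      rw [Finset.mem_range] at hi
      have : q ^ a / q ^ i % q = 0 := by
        rw [Nat.pow_div hi.le hq.pos]
        obtain ⟨c, hc⟩ := dvd_pow_self q (n := a - i) (by omega)
        rw [hc, Nat.mul_mod_right]
      rw [this, Nat.choose_zero_right]
    rw [h1, h2, h3, Nat.choose_one_right, Nat.cast_one, mul_one] at lucas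
    have hdm : (q : ℤ) ∣ (m : ℤ) :=
      by have h4 := lucas.dvd; have h5 : (q:ℤ) ∣ (n.choose (q ^ a) : ℤ) := Int.natCast_dvd_natCast.mpr hdvd; simpa using dvd_add h4 h5
    exact hqm (Int.natCast_dvd_natCast.mp hdm)

theorem stmt_4 (n : ℕ) (hn : 2 ≤ n) :
    (∀ p k : ℕ, p.Prime → 1 ≤ k → n = p ^ k →
        (Finset.Ioo 0 n).gcd (fun j => n.choose j) = p) ∧
    ((¬ ∃ p k : ℕ, p.Prime ∧ 1 ≤ k ∧ n = p ^ k) →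
        (Finset.Ioo 0 n).gcd (fun j => n.choose j) = 1) := by
  have h1mem : 1 ∈ Finset.Ioo 0 n := by simp; omega
  have hgn : (Finset.Ioo 0 n).gcd (fun j => n.choose j) ∣ n := by
    have := Finset.gcd_dvd (f := fun j => n.choose j) h1mem
    simpa using this
  constructor
  · rintro p k hp hk rfl
    set g := (Finset.Ioo 0 (p ^ k)).gcd (fun j => (p ^ k).choose j) with hg
    have hpg : p ∣ g := by
      apply Finset.dvd_gcd
      intro j hj
      rw [Finset.mem_Ioo] at hj
      exact Nat.Prime.dvd_choose_pow hp hj.1.ne' hj.2.ne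
    obtain ⟨m, hmk, hgm⟩ := (Nat.dvd_prime_pow hp).mp hgn
    have hm1 : 1 ≤ m := by
      rcases Nat.eq_zero_or_pos m with rfl | h
      · simp at hgm; rw [hgm] at hpg; have := hp.two_le; exact absurd (Nat.le_of_dvd one_pos hpg) (by omega)
      · exact h
    have hmem2 : p ^ (k - 1) ∈ Finset.Ioo 0 (p ^ k) := by
      rw [Finset.mem_Ioo]
      exact ⟨pow_pos hp.pos _, Nat.pow_lt_pow_right hp.one_lt (by omega)⟩
    have hgc : g ∣ (p ^ k).choose (p ^ (k - 1)) := Finset.gcd_dvd hmem2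
    have hem : emultiplicity p ((p ^ k).choose (p ^ (k - 1))) = (1 : ℕ) := by
      rw [Nat.Prime.emultiplicity_choose_prime_pow hp
        (Nat.pow_le_pow_right hp.pos (by omega)) (pow_pos hp.pos _).ne',
        multiplicity_pow_self_of_prime hp.prime]
      congr 1
      omega
    have hm2 : m < 2 := by
      by_contra hm2
      push_neg at hm2
      have : p ^ 2 ∣ (p ^ k).choose (p ^ (k - 1)) :=
        dvd_trans (pow_dvd_pow p hm2) (hgm ▸ hgc)
      have := pow_dvd_iff_le_emultiplicity.mp this
      rw [hem] at this
      exact absurd (by exact_mod_cast this) (by omega)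
    interval_cases m
    · simpa using hgm
  · intro hnp
    by_contra hg1
    set g := (Finset.Ioo 0 n).gcd (fun j => n.choose j) with hg
    have hg0 : g ≠ 0 := fun h => by rw [h] at hgn; omega
    have hg2 : 2 ≤ g := by omega
    have hq : g.minFac.Prime := Nat.minFac_prime hg1
    have hqall : ∀ j ∈ Finset.Ioo 0 n, g.minFac ∣ n.choose j := fun j hj =>
      dvd_trans (Nat.minFac_dvd g) (Finset.gcd_dvd hj)
    have := aux_pow n g.minFac hn hq hqall
    exact hnp ⟨g.minFac, n.factorization g.minFac, hq, by
      rcases Nat.eq_zero_or_pos (n.factorization g.minFac) with h0 | h0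
      · rw [h0, pow_zero] at this; omega
      · exact h0, this⟩
end

section
/- Let R be a commutative ring and h ∈ R[[t]] a power series whose constant coefficient is a nonzerodivisor in R. Then the intersection over all k ∈ ℕ of the ideals (t^k) + (h) of R[[t]] equals the ideal (h). Equivalently, in the quotient ring B = R[[t]]/(h), the intersection of the ideals t^k·B over all k ∈ ℕ is zero. -/
private lemma cancel_aux {R : Type*} [CommRing R] {h : PowerSeries R}
    (hc : PowerSeries.constantCoeff h ∈ nonZeroDivisors R)
    (u : PowerSeries R) (k : ℕ)
    (H : ∀ j < k, PowerSeries.coeff j (u * h) = 0) :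
    ∀ j < k, PowerSeries.coeff j u = 0 := by
  intro j
  induction j using Nat.strong_induction_on with
  | _ j ih =>
    intro hj
    have hjc := H j hj
    rw [PowerSeries.coeff_mul, Finset.sum_eq_single (j, 0)] at hjc
    · simp only [PowerSeries.coeff_zero_eq_constantCoeff] at hjc
      exact hc.2 _ hjc
    · intro p hp hne
      rw [Finset.HasAntidiagonal.mem_antidiagonal] at hp
      have h1 : p.1 < j := by
        rcases lt_or_eq_of_le (Nat.le.intro hp) with h' | h'
        · exact h'
        · exact absurd (Prod.ext h' (by omega)) hne
      rw [ih p.1 h1 (h1.trans hj), zero_mul]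
    · intro habs
      exact absurd (Finset.HasAntidiagonal.mem_antidiagonal.mpr (by simp)) habs

theorem stmt_11 (R : Type*) [CommRing R] (h : PowerSeries R)
    (hc : PowerSeries.constantCoeff h ∈ nonZeroDivisors R) :
    (⨅ k : ℕ, (Ideal.span {(PowerSeries.X : PowerSeries R) ^ k} + Ideal.span {h}))
      = Ideal.span {h} := by
  apply le_antisymm
  · intro f hf
    -- For each k, extract b k with X^k ∣ f - b k * h
    have key : ∀ k : ℕ, ∃ b : PowerSeries R,
        (PowerSeries.X : PowerSeries R) ^ k ∣ f - b * h := by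
      intro k
      have := (Submodule.mem_iInf _).mp hf k
      rw [Submodule.add_eq_sup, Submodule.mem_sup] at this
      obtain ⟨a, ha, b, hb, hab⟩ := this
      rw [Ideal.mem_span_singleton] at ha hb
      obtain ⟨b', rfl⟩ := hb
      refine ⟨b', ?_⟩
      rw [mul_comm b' h, ← hab]
      simpa using ha
    choose B hB using key
    -- coefficients of B stabilize
    have stab : ∀ i k : ℕ, i < k →
        PowerSeries.coeff i (B (i + 1)) = PowerSeries.coeff i (B k) := by
      intro i k hik
      have hd : (PowerSeries.X : PowerSeries R) ^ (i + 1) ∣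
          (B (i + 1) - B k) * h := by
        have h1 := hB (i + 1)
        have h2 := hB k
        have h3 : (PowerSeries.X : PowerSeries R) ^ (i + 1) ∣ f - B k * h :=
          dvd_trans (pow_dvd_pow _ hik) h2
        have := dvd_sub h3 h1
        simpa [sub_mul, sub_sub_sub_cancel_left] using this
      have hz : ∀ j < i + 1, PowerSeries.coeff j ((B (i + 1) - B k) * h) = 0 := by
        intro j hj
        rw [PowerSeries.X_pow_dvd_iff] at hd
        exact hd j hj
      have := cancel_aux hc _ _ hz i (Nat.lt_succ_self i)
      rw [map_sub, sub_eq_zero] at this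
      exact this
    set g : PowerSeries R := PowerSeries.mk
      (fun n => PowerSeries.coeff n (B (n + 1))) with hg
    have hfg : f = g * h := by
      ext n
      have h1 := hB (n + 1)
      rw [PowerSeries.X_pow_dvd_iff] at h1
      have h2 := h1 n (Nat.lt_succ_self n)
      rw [map_sub, sub_eq_zero] at h2
      rw [h2, PowerSeries.coeff_mul, PowerSeries.coeff_mul]
      apply Finset.sum_congr rfl
      intro p hp
      rw [Finset.HasAntidiagonal.mem_antidiagonal] at hp
      congr 1
      rw [hg, PowerSeries.coeff_mk]
      rcases lt_or_eq_of_le (Nat.le.intro (by omega : p.1 + p.2 = n)) with h' | h'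
      · exact (stab p.1 (n + 1) (by omega)).symm
      · subst h'
        exact (stab p.1 (p.1 + 1) (Nat.lt_succ_self _)).symm
    rw [Ideal.mem_span_singleton, hfg]
    exact Dvd.intro g (mul_comm h g)
  · exact le_iInf fun k => le_sup_right
end

section
/- Let A be a commutative ring, N ⊆ ℕ∖{0}, and q ≥ 1 an integer. In the polynomial ring A[T_i : i ∈ N], give T_i the weight ⌊i/q⌋ and let F^d ⊆ A[T_i] be the A-submodule spanned by monomials of weight at most d. Define G^d to be the smallest family of additive subgroups of A[T_i] (indexed by d ∈ ℕ, increasing in d) such that: (a) every polynomial all of whose monomials have ordinary weighted degree j (with T_i of degree i) lies in G^{⌊j/q⌋}, and (b) G^d · G^e ⊆ G^{d+e}. Then G^d = F^d for every d ∈ ℕ. -/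
/-- The ordinary weighted degree of a monomial (exponent vector) in the variables
`T_i`, `i ∈ N`, where `T_i` has degree `i`. -/
def ordWeight (N : Set ℕ) (m : N →₀ ℕ) : ℕ := ∑ i ∈ m.support, m i * (i : ℕ)

/-- The `q`-weight of a monomial: `T_i` has weight `⌊i / q⌋`. -/
def qWeight (N : Set ℕ) (q : ℕ) (m : N →₀ ℕ) : ℕ := ∑ i ∈ m.support, m i * ((i : ℕ) / q)

/-- The `A`-submodule spanned by the monomials of `q`-weight at most `d`. -/
noncomputable def F (A : Type*) [CommRing A] (N : Set ℕ) (q d : ℕ) :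
    Submodule A (MvPolynomial N A) :=
  Submodule.span A {f | ∃ m : N →₀ ℕ, qWeight N q m ≤ d ∧ f = MvPolynomial.monomial m 1}

/-- A family of additive subgroups `H d` satisfies the defining conditions of the
`q`-filtration: it is increasing, contains every polynomial all of whose monomials
have ordinary weighted degree `j` in level `⌊j / q⌋`, and is multiplicative. -/
def GoodFamily (A : Type*) [CommRing A] (N : Set ℕ) (q : ℕ)
    (H : ℕ → AddSubgroup (MvPolynomial N A)) : Prop :=
  (∀ d e : ℕ, d ≤ e → H d ≤ H e) ∧
  (∀ (j : ℕ) (f : MvPolynomial N A),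
      (∀ m ∈ f.support, ordWeight N m = j) → f ∈ H (j / q)) ∧
  (∀ (d e : ℕ) (x y : MvPolynomial N A), x ∈ H d → y ∈ H e → x * y ∈ H (d + e))

/-- The smallest family of additive subgroups satisfying the conditions above. -/
noncomputable def G (A : Type*) [CommRing A] (N : Set ℕ) (q d : ℕ) :
    AddSubgroup (MvPolynomial N A) :=
  ⨅ H ∈ {H : ℕ → AddSubgroup (MvPolynomial N A) | GoodFamily A N q H}, H d

lemma ordWeight_eq (N : Set ℕ) (m : N →₀ ℕ) :
    ordWeight N m = m.sum (fun i e => e * (i : ℕ)) := rfl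

lemma qWeight_eq (N : Set ℕ) (q : ℕ) (m : N →₀ ℕ) :
    qWeight N q m = m.sum (fun i e => e * ((i : ℕ) / q)) := rfl

lemma qWeight_add (N : Set ℕ) (q : ℕ) (m m' : N →₀ ℕ) :
    qWeight N q (m + m') = qWeight N q m + qWeight N q m' := by
  simp only [qWeight_eq]
  exact Finsupp.sum_add_index' (fun a => zero_mul _) (fun a b c => add_mul _ _ _)

lemma qWeight_le_ordWeight_div (N : Set ℕ) (q : ℕ) (hq : 1 ≤ q) (m : N →₀ ℕ) :
    qWeight N q m ≤ ordWeight N m / q := by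
  rw [Nat.le_div_iff_mul_le hq, qWeight, Finset.sum_mul]
  refine Finset.sum_le_sum fun i _ => ?_
  rw [mul_assoc]
  exact Nat.mul_le_mul_left _ (Nat.div_mul_le_self _ _)

lemma F_good (A : Type*) [CommRing A] (N : Set ℕ) (q : ℕ) (hq : 1 ≤ q) :
    GoodFamily A N q (fun d => (F A N q d).toAddSubgroup) := by
  refine ⟨fun d e hde => ?_, fun j f hf => ?_, fun d e x y hx hy => ?_⟩
  · exact Submodule.span_mono (fun f ⟨m, hm, hfm⟩ => ⟨m, hm.trans hde, hfm⟩)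
  · -- f = sum of its monomials
    rw [f.as_sum]
    refine Submodule.sum_mem _ fun m hm => ?_
    have : (MvPolynomial.monomial m) (f.coeff m)
        = f.coeff m • MvPolynomial.monomial m 1 := by
      rw [MvPolynomial.smul_monomial, smul_eq_mul, mul_one]
    rw [this]
    refine Submodule.smul_mem _ _ (Submodule.subset_span ⟨m, ?_, rfl⟩)
    rw [← hf m hm]
    exact qWeight_le_ordWeight_div N q hq m
  · have key : F A N q d * F A N q e ≤ F A N q (d + e) := by
      rw [F, F, Submodule.span_mul_span]
      refine Submodule.span_le.2 ?_
      rintro z ⟨x, ⟨mx, hmx, rfl⟩, y, ⟨my, hmy, rfl⟩, rfl⟩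
      refine Submodule.subset_span ⟨mx + my, ?_, ?_⟩
      · rw [qWeight_add]; exact add_le_add hmx hmy
      · show MvPolynomial.monomial mx 1 * MvPolynomial.monomial my 1 = _
        rw [MvPolynomial.monomial_mul, one_mul]
    exact key (Submodule.mul_mem_mul hx hy)

section
variable {A : Type*} [CommRing A] {N : Set ℕ} {q : ℕ}
variable {H : ℕ → AddSubgroup (MvPolynomial N A)}

lemma good_C (hH : GoodFamily A N q H) (a : A) : (MvPolynomial.C a : MvPolynomial N A) ∈ H 0 := by
  have := hH.2.1 0 (MvPolynomial.C a) (fun m hm => ?_)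
  · simpa [Nat.zero_div] using this
  · have : MvPolynomial.coeff m (MvPolynomial.C a) ≠ 0 := MvPolynomial.mem_support_iff.1 hm
    rw [MvPolynomial.coeff_C] at this
    have hm0 : m = 0 := by by_contra h; exact this (by simp [Ne.symm h])
    rw [hm0, ordWeight_eq, Finsupp.sum_zero_index]

lemma good_one (hH : GoodFamily A N q H) : (1 : MvPolynomial N A) ∈ H 0 := by
  simpa using good_C hH 1

lemma good_X (hH : GoodFamily A N q H) (a : N) :
    (MvPolynomial.X a : MvPolynomial N A) ∈ H ((a : ℕ) / q) := by
  refine hH.2.1 (a : ℕ) (MvPolynomial.X a) (fun m hm => ?_)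
  have : MvPolynomial.coeff m (MvPolynomial.X a : MvPolynomial N A) ≠ 0 :=
    MvPolynomial.mem_support_iff.1 hm
  rw [MvPolynomial.coeff_X'] at this
  have hm0 : m = Finsupp.single a 1 := by
    by_contra h; exact this (by simp [Ne.symm h])
  rw [hm0, ordWeight_eq, Finsupp.sum_single_index, one_mul]
  exact zero_mul _

lemma good_X_pow (hH : GoodFamily A N q H) (a : N) (b : ℕ) :
    (MvPolynomial.X a ^ b : MvPolynomial N A) ∈ H (b * ((a : ℕ) / q)) := by
  induction b with
  | zero => simpa using good_one hH
  | succ b ih =>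
      rw [pow_succ, Nat.succ_mul]
      exact hH.2.2 _ _ _ _ ih (good_X hH a)

lemma good_monomial (hH : GoodFamily A N q H) (m : N →₀ ℕ) :
    (MvPolynomial.monomial m 1 : MvPolynomial N A) ∈ H (qWeight N q m) := by
  rw [MvPolynomial.monomial_eq, map_one, one_mul]
  induction m using Finsupp.induction with
  | zero =>
      rw [Finsupp.prod_zero_index]
      have : qWeight N q 0 = 0 := by rw [qWeight_eq, Finsupp.sum_zero_index]
      rw [this]; exact good_one hH
  | single_add a b f ha hb ih =>
      rw [Finsupp.prod_add_index (fun i _ => pow_zero _) (fun i _ b c => pow_add _ _ _),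
        Finsupp.prod_single_index, qWeight_add]
      swap
      · exact pow_zero _
      have h1 : qWeight N q (Finsupp.single a b) = b * ((a : ℕ) / q) := by
        rw [qWeight_eq]; exact Finsupp.sum_single_index (zero_mul _)
      rw [h1]
      exact hH.2.2 _ _ _ _ (good_X_pow hH a b) ih

end

theorem stmt_18 (A : Type*) [CommRing A] (N : Set ℕ) (hN : 0 ∉ N)
    (q : ℕ) (hq : 1 ≤ q) (d : ℕ) :
    G A N q d = (F A N q d).toAddSubgroup := by
  apply le_antisymm
  · exact iInf₂_le (fun d => (F A N q d).toAddSubgroup) (F_good A N q hq)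
  · refine le_iInf₂ fun H hH => ?_
    intro x hx
    refine Submodule.span_induction (p := fun x _ => x ∈ H d) ?_ ?_ ?_ ?_ hx
    · rintro f ⟨m, hm, rfl⟩
      exact hH.1 _ _ hm (good_monomial hH m)
    · exact (H d).zero_mem
    · exact fun x y _ _ hx hy => (H d).add_mem hx hy
    · intro a x _ hx
      rw [MvPolynomial.smul_eq_C_mul]
      simpa using hH.2.2 0 d _ _ (good_C hH a) hx
end
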